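/- For every integer p ≥ 2 (working in ℚ[y] or ℂ[y]), the polynomials U_p(y) − U_{p−1}(y) and U_{p−2}(y) − U_{p−3}(y) are coprime, i.e. their gcd is 1. -/

import Mathlib

open Polynomial Polynomial.Chebyshev

private lemma U_eval_zero (n : ℤ) :
    eval 0 (U ℚ n) * eval 0 (U ℚ (n - 1)) = 0 ∧
    eval 0 (U ℚ n) ^ 2 + eval 0 (U ℚ (n - 1)) ^ 2 = 1 := by
  induction n using Int.induction_on with
  | zero => simp [U_zero, U_neg_one]
  | succ k ih =>
    have h : (U ℚ ((k : ℤ) + 1)) = 2 * X * U ℚ k - U ℚ (k - 1) := U_add_one ℚ k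
    constructor
    · simp only [h, add_sub_cancel_right]
      simp only [eval_sub, eval_mul, eval_ofNat, eval_X, mul_zero, zero_mul, zero_sub]
      rw [neg_mul, mul_comm, ih.1, neg_zero]
    · simp only [h, add_sub_cancel_right]
      simp only [eval_sub, eval_mul, eval_ofNat, eval_X, mul_zero, zero_mul, zero_sub]
      rw [neg_pow, add_comm]
      simpa using ih.2
  | pred k ih =>
    have h : (U ℚ (-(k : ℤ) - 1 - 1)) = 2 * X * U ℚ (-(k : ℤ) - 1) - U ℚ (-(k : ℤ)) := by
      have := U_sub_two ℚ (-(k : ℤ))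
      simpa [sub_sub] using this
    constructor
    · rw [h]
      simp only [eval_sub, eval_mul, eval_ofNat, eval_X, mul_zero, zero_mul, zero_sub]
      rw [mul_neg, mul_comm, ih.1, neg_zero]
    · rw [h]
      simp only [eval_sub, eval_mul, eval_ofNat, eval_X, mul_zero, zero_mul, zero_sub]
      rw [neg_pow]
      simpa [add_comm] using ih.2

private lemma V_coprime_succ (n : ℤ) :
    IsCoprime (U ℚ n - U ℚ (n - 1)) (U ℚ (n - 1) - U ℚ (n - 2)) := by
  induction n using Int.induction_on with
  | zero =>
    have h1 : U ℚ (0:ℤ) - U ℚ ((0:ℤ) - 1) = 1 := by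
      norm_num [U_zero, U_neg_one]
    rw [h1]
    exact isCoprime_one_left
  | succ k ih =>
    have e1 : ((k:ℤ) + 1 - 1) = (k:ℤ) := by ring
    have e2 : ((k:ℤ) + 1 - 2) = (k:ℤ) - 1 := by ring
    rw [e1, e2]
    have e : U ℚ ((k:ℤ) + 1) - U ℚ (k:ℤ)
        = -(U ℚ ((k:ℤ) - 1) - U ℚ ((k:ℤ) - 2)) + (U ℚ (k:ℤ) - U ℚ ((k:ℤ) - 1)) * (2 * X) := by
      linear_combination U_add_one ℚ (k:ℤ) - U_sub_two ℚ (k:ℤ)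
    rw [e, IsCoprime.add_mul_left_left_iff]
    exact ih.symm.neg_left
  | pred k ih =>
    rw [show (-(k:ℤ) - 1 - 1) = -(k:ℤ) - 2 by ring, show (-(k:ℤ) - 1 - 2) = -(k:ℤ) - 3 by ring]
    have hd := U_sub_two ℚ (-(k:ℤ) - 1)
    rw [show (-(k:ℤ) - 1 - 2) = -(k:ℤ) - 3 by ring, show (-(k:ℤ) - 1 - 1) = -(k:ℤ) - 2 by ring] at hd
    have e3 : U ℚ (-(k:ℤ) - 2) - U ℚ (-(k:ℤ) - 3)
        = -(U ℚ (-(k:ℤ)) - U ℚ (-(k:ℤ) - 1))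
          + (U ℚ (-(k:ℤ) - 1) - U ℚ (-(k:ℤ) - 2)) * (2 * X) := by
      linear_combination U_sub_two ℚ (-(k:ℤ)) - hd
    rw [e3, IsCoprime.add_mul_left_right_iff]
    exact ih.symm.neg_right

private lemma V_ne_at_zero (n : ℤ) : eval 0 (U ℚ n - U ℚ (n - 1)) ≠ 0 := by
  obtain ⟨h1, h2⟩ := U_eval_zero n
  intro hc
  rw [eval_sub, sub_eq_zero] at hc
  rw [hc, ← sq] at h1
  rw [pow_eq_zero_iff (two_ne_zero)] at h1
  rw [hc, h1] at h2
  norm_num at h2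

theorem chebyshev_U_sub_U_coprime (p : ℤ) (hp : 2 ≤ p) :
    IsCoprime (U ℚ p - U ℚ (p - 1)) (U ℚ (p - 2) - U ℚ (p - 3)) := by
  have h2' := U_sub_two ℚ (p - 1)
  rw [show p - 1 - 2 = p - 3 by ring, show p - 1 - 1 = p - 2 by ring] at h2'
  have e : U ℚ (p - 2) - U ℚ (p - 3)
      = (U ℚ (p - 1) - U ℚ (p - 2)) * (2 * X) + (U ℚ p - U ℚ (p - 1)) * (-1) := by
    linear_combination U_sub_two ℚ p - h2'
  rw [e, IsCoprime.add_mul_left_right_iff]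
  apply IsCoprime.mul_right (V_coprime_succ p)
  apply IsCoprime.mul_right
  · exact ⟨0, C (2⁻¹ : ℚ), by
      rw [zero_mul, zero_add, (map_ofNat Polynomial.C 2).symm, ← Polynomial.C_mul]
      norm_num⟩
  · refine (Polynomial.prime_X.coprime_iff_not_dvd.mpr ?_).symm
    rw [Polynomial.X_dvd_iff, Polynomial.coeff_zero_eq_eval_zero]
    exact V_ne_at_zero p
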